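/- Let {A^{(j)}} and {B^{(j)}} be as in the hypotheses of the perturbation lemma (with the bounds ε_j sqrt(#Br_j)((A^{(1)}···A^{(j)})_{v_0,w})^{-1} ∏_{k=1}^j (2‖A^{(k)}‖+1) ≤ 4^{-j} and |A^{(j)}_{v,w} − B^{(j)}_{v,w}| ≤ ε_j A^{(j)}_{v,w} for j ≥ N). Then for every φ in the inverse limit of {B^{(j)}} and every j ≥ N, the sequence {A^{(j)} A^{(j+1)} ··· A^{(j+k)} φ^{j+k}}_{k=1}^∞ is a Cauchy sequence in ℝ^{Br_{j-1}}; in fact consecutive terms differ in norm by at most K_N · 2^{-(j+k+1)} · φ^0 for a constant K_N depending only on the systems up to level N. -/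

import Mathlib

open scoped BigOperators

variable (V : ℕ → Type) [∀ n, Fintype (V n)] [∀ n, DecidableEq (V n)]
  [∀ n, Nonempty (V n)] [Subsingleton (V 0)]

/-- The product `A^{(1)} A^{(2)} ⋯ A^{(k)}` of the matrices of a projective matrix
system over the levels of a Bratteli diagram (with our indexing, `A j` is the matrix
over `V j × V (j+1)`). -/
def prodUpTo (A : ∀ j, Matrix (V j) (V (j + 1)) ℝ) : ∀ k, Matrix (V 0) (V k) ℝ
  | 0 => 1
  | k + 1 => prodUpTo A k * A k

/-- The inverse limit `lim_j A^{(j)}`: sequences of nonnegative vectors `ψ^j ∈ [0,∞)^{V j}`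
with `ψ^j = A^{(j+1)} ψ^{j+1}`, as a subset of the product space `∏_j (V j → ℝ)`. -/
def limSet (A : ∀ j, Matrix (V j) (V (j + 1)) ℝ) : Set (∀ j, V j → ℝ) :=
  {ψ | (∀ j v, 0 ≤ ψ j v) ∧ ∀ j, ψ j = (A j).mulVec (ψ (j + 1))}

/-- The Euclidean (`ℓ²`) norm of a vector. -/
noncomputable def eNorm {ι : Type} [Fintype ι] (x : ι → ℝ) : ℝ :=
  Real.sqrt (∑ i, (x i) ^ 2)

/-- The operator norm of a matrix for the Euclidean norms. -/
noncomputable def l2opNorm {ι κ : Type} [Fintype ι] [Fintype κ] (M : Matrix ι κ ℝ) : ℝ :=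
  sSup {c | ∃ x : κ → ℝ, eNorm x ≤ 1 ∧ c = eNorm (M.mulVec x)}

/-- The segment product `A^{(j+1)} A^{(j+2)} ⋯ A^{(j+k)}` of a matrix system. -/
def segProd (A : ∀ j, Matrix (V j) (V (j + 1)) ℝ) (j : ℕ) :
    ∀ k, Matrix (V j) (V (j + k)) ℝ
  | 0 => (1 : Matrix (V j) (V j) ℝ)
  | k + 1 => segProd A j k * A (j + k)

section auxE
variable {ι κ : Type} [Fintype ι] [Fintype κ]

lemma eNorm_eq_norm' (x : ι → ℝ) :
    eNorm x = ‖(WithLp.equiv 2 (ι → ℝ)).symm x‖ := by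
  rw [EuclideanSpace.norm_eq]
  unfold eNorm
  congr 1
  refine Finset.sum_congr rfl fun i _ => ?_
  show x i ^ 2 = ‖x i‖ ^ 2
  rw [Real.norm_eq_abs, sq_abs]

lemma eNorm_nonneg' (x : ι → ℝ) : 0 ≤ eNorm x := Real.sqrt_nonneg _

lemma eNorm_zero' : eNorm (0 : ι → ℝ) = 0 := by simp [eNorm]

lemma eNorm_smul' (c : ℝ) (x : ι → ℝ) : eNorm (c • x) = |c| * eNorm x := by
  rw [eNorm_eq_norm', eNorm_eq_norm', ← Real.norm_eq_abs]
  have h : (WithLp.equiv 2 (ι → ℝ)).symm (c • x)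
      = c • (WithLp.equiv 2 (ι → ℝ)).symm x := rfl
  rw [h, norm_smul]

lemma eNorm_sub_le' (a b c : ι → ℝ) : eNorm (a - b) ≤ eNorm (a - c) + eNorm (c - b) := by
  rw [eNorm_eq_norm', eNorm_eq_norm', eNorm_eq_norm']
  have h : ∀ u v : ι → ℝ, (WithLp.equiv 2 (ι → ℝ)).symm (u - v)
      = (WithLp.equiv 2 (ι → ℝ)).symm u - (WithLp.equiv 2 (ι → ℝ)).symm v := fun _ _ => rfl
  rw [h, h, h]
  have e : (WithLp.equiv 2 (ι → ℝ)).symm a - (WithLp.equiv 2 (ι → ℝ)).symm b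
      = ((WithLp.equiv 2 (ι → ℝ)).symm a - (WithLp.equiv 2 (ι → ℝ)).symm c)
        + ((WithLp.equiv 2 (ι → ℝ)).symm c - (WithLp.equiv 2 (ι → ℝ)).symm b) := by abel
  rw [e]
  exact norm_add_le _ _

lemma eNorm_sub_comm' (a b : ι → ℝ) : eNorm (a - b) = eNorm (b - a) := by
  rw [eNorm_eq_norm', eNorm_eq_norm']
  have h : ∀ u v : ι → ℝ, (WithLp.equiv 2 (ι → ℝ)).symm (u - v)
      = (WithLp.equiv 2 (ι → ℝ)).symm u - (WithLp.equiv 2 (ι → ℝ)).symm v := fun _ _ => rfl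
  rw [h, h, norm_sub_rev]

lemma eNorm_mono' (x y : ι → ℝ) (h : ∀ i, |x i| ≤ y i) : eNorm x ≤ eNorm y := by
  unfold eNorm
  apply Real.sqrt_le_sqrt
  apply Finset.sum_le_sum
  intro i _
  calc x i ^ 2 = |x i| ^ 2 := (sq_abs _).symm
    _ ≤ y i ^ 2 := pow_le_pow_left₀ (abs_nonneg _) (h i) 2

lemma eNorm_le_sqrt_card_mul' (x : ι → ℝ) (t : ℝ) (ht : 0 ≤ t) (h : ∀ i, |x i| ≤ t) :
    eNorm x ≤ Real.sqrt (Fintype.card ι) * t := by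
  have h1 : eNorm x ≤ Real.sqrt (∑ _i : ι, t ^ 2) := by
    unfold eNorm
    apply Real.sqrt_le_sqrt
    apply Finset.sum_le_sum
    intro i _
    calc x i ^ 2 = |x i| ^ 2 := (sq_abs _).symm
      _ ≤ t ^ 2 := pow_le_pow_left₀ (abs_nonneg _) (h i) 2
  refine h1.trans (le_of_eq ?_)
  rw [Finset.sum_const, Finset.card_univ, nsmul_eq_mul,
    Real.sqrt_mul (by positivity), Real.sqrt_sq ht]

lemma eNorm_mulVec_le_frob' (M : Matrix ι κ ℝ) (x : κ → ℝ) :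
    eNorm (M.mulVec x) ≤ Real.sqrt (∑ v, ∑ w, M v w ^ 2) * eNorm x := by
  unfold eNorm
  rw [← Real.sqrt_mul (by positivity)]
  apply Real.sqrt_le_sqrt
  rw [Finset.sum_mul]
  apply Finset.sum_le_sum
  intro v _
  have h : M.mulVec x v = ∑ w, M v w * x w := rfl
  rw [h]
  exact Finset.sum_mul_sq_le_sq_mul_sq _ _ _

lemma l2opNorm_bddAbove' (M : Matrix ι κ ℝ) :
    BddAbove {c | ∃ x : κ → ℝ, eNorm x ≤ 1 ∧ c = eNorm (M.mulVec x)} := by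
  refine ⟨Real.sqrt (∑ v, ∑ w, M v w ^ 2), ?_⟩
  rintro c ⟨x, hx, rfl⟩
  calc eNorm (M.mulVec x) ≤ Real.sqrt (∑ v, ∑ w, M v w ^ 2) * eNorm x :=
      eNorm_mulVec_le_frob' M x
    _ ≤ Real.sqrt (∑ v, ∑ w, M v w ^ 2) * 1 :=
      mul_le_mul_of_nonneg_left hx (Real.sqrt_nonneg _)
    _ = _ := mul_one _

lemma l2opNorm_nonneg' (M : Matrix ι κ ℝ) : 0 ≤ l2opNorm M := by
  apply le_csSup (l2opNorm_bddAbove' M)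
  exact ⟨0, by simp [eNorm_zero'], by simp [Matrix.mulVec_zero, eNorm_zero']⟩

lemma eNorm_mulVec_le' (M : Matrix ι κ ℝ) (x : κ → ℝ) :
    eNorm (M.mulVec x) ≤ l2opNorm M * eNorm x := by
  rcases eq_or_ne (eNorm x) 0 with h | h
  · have hx0 : x = 0 := by
      have h2 : ‖(WithLp.equiv 2 (κ → ℝ)).symm x‖ = 0 := by rw [← eNorm_eq_norm']; exact h
      have h3 := norm_eq_zero.mp h2
      funext i
      have := congrFun (congrArg (fun z => (WithLp.equiv 2 (κ → ℝ)) z) h3) i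
      simpa using this
    subst hx0
    rw [Matrix.mulVec_zero, eNorm_zero', h, mul_zero]
  · have hx : 0 < eNorm x := lt_of_le_of_ne (eNorm_nonneg' x) (Ne.symm h)
    have hmem : ((eNorm x)⁻¹ * eNorm (M.mulVec x)) ∈
        {c | ∃ y : κ → ℝ, eNorm y ≤ 1 ∧ c = eNorm (M.mulVec y)} := by
      refine ⟨(eNorm x)⁻¹ • x, ?_, ?_⟩
      · rw [eNorm_smul', abs_of_pos (inv_pos.mpr hx), inv_mul_cancel₀ hx.ne']
      · rw [Matrix.mulVec_smul, eNorm_smul', abs_of_pos (inv_pos.mpr hx)]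
    have hle := le_csSup (l2opNorm_bddAbove' M) hmem
    have h5 := mul_le_mul_of_nonneg_left hle hx.le
    calc eNorm (M.mulVec x) = eNorm x * ((eNorm x)⁻¹ * eNorm (M.mulVec x)) := by
          field_simp
      _ ≤ eNorm x * l2opNorm M := h5
      _ = l2opNorm M * eNorm x := mul_comm _ _

end auxE

lemma prodUpTo_nonneg' (A : ∀ j, Matrix (V j) (V (j + 1)) ℝ) (hA : ∀ j v w, 0 ≤ A j v w) :
    ∀ k (v : V 0) (w : V k), 0 ≤ prodUpTo V A k v w := by
  intro k
  induction k with
  | zero =>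
    intro v w
    have h : prodUpTo V A 0 v w = if v = w then (1:ℝ) else 0 := Matrix.one_apply
    rw [h]; split <;> norm_num
  | succ k ih =>
    intro v w
    have h : prodUpTo V A (k + 1) v w = ∑ u, prodUpTo V A k v u * A k u w := Matrix.mul_apply
    rw [h]
    exact Finset.sum_nonneg fun u _ => mul_nonneg (ih v u) (hA k u w)

lemma segProd_mulVec_le' (A : ∀ j, Matrix (V j) (V (j + 1)) ℝ) (j : ℕ) :
    ∀ (c : ℕ) (z : V (j + c) → ℝ),
      eNorm ((segProd V A j c).mulVec z) ≤
        (∏ i ∈ Finset.range c, l2opNorm (A (j + i))) * eNorm z := by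
  intro c
  induction c with
  | zero =>
    intro z
    have h : (segProd V A j 0).mulVec z = z := Matrix.one_mulVec z
    rw [h, Finset.prod_range_zero, one_mul]
  | succ c ih =>
    intro z
    have e : (segProd V A j (c + 1)).mulVec z
        = (segProd V A j c).mulVec ((A (j + c)).mulVec z) :=
      (Matrix.mulVec_mulVec z (segProd V A j c) (A (j + c))).symm
    rw [e, Finset.prod_range_succ]
    calc eNorm ((segProd V A j c).mulVec ((A (j + c)).mulVec z))
        ≤ (∏ i ∈ Finset.range c, l2opNorm (A (j + i))) * eNorm ((A (j + c)).mulVec z) := ih _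
      _ ≤ (∏ i ∈ Finset.range c, l2opNorm (A (j + i))) * (l2opNorm (A (j + c)) * eNorm z) :=
        mul_le_mul_of_nonneg_left (eNorm_mulVec_le' _ _)
          (Finset.prod_nonneg fun i _ => l2opNorm_nonneg' _)
      _ = (∏ i ∈ Finset.range c, l2opNorm (A (j + i))) * l2opNorm (A (j + c)) * eNorm z := by
        ring

lemma phi0_eq' (B : ∀ j, Matrix (V j) (V (j + 1)) ℝ) (φ : ∀ j, V j → ℝ)
    (hφ : ∀ j, φ j = (B j).mulVec (φ (j + 1))) :
    ∀ k, φ 0 = (prodUpTo V B k).mulVec (φ k) := by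
  intro k
  induction k with
  | zero => exact (Matrix.one_mulVec (φ 0)).symm
  | succ k ih =>
    calc φ 0 = (prodUpTo V B k).mulVec (φ k) := ih
      _ = (prodUpTo V B k).mulVec ((B k).mulVec (φ (k + 1))) := by rw [← hφ k]
      _ = (prodUpTo V B (k + 1)).mulVec (φ (k + 1)) := Matrix.mulVec_mulVec _ _ _

/-- Under the hypotheses of the perturbation lemma, for every `φ` in the inverse limit of
`{B^{(j)}}` and every `j ≥ N` the sequence `k ↦ A^{(j)} ⋯ A^{(j+k)} φ^{j+k}` is Cauchy,
consecutive terms differing by at most `K_N 2^{-(j+k+1)} φ^0`. -/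
theorem stmt_4 (A B : ∀ j, Matrix (V j) (V (j + 1)) ℝ)
    (hA : ∀ j v w, 0 ≤ A j v w)
    (hApos : ∀ k (v0 : V 0) (w : V k), prodUpTo V A k v0 w ≠ 0)
    (hB : ∀ j v w, 0 ≤ B j v w)
    (hBpos : ∀ k (v0 : V 0) (w : V k), prodUpTo V B k v0 w ≠ 0)
    (ε : ℕ → ℝ) (hε : ∀ j, 0 < ε j ∧ ε j < 1 / 2)
    (hbound : ∀ (j : ℕ) (v0 : V 0) (w : V (j + 1)),
      ε j * Real.sqrt (Fintype.card (V (j + 1))) * (prodUpTo V A (j + 1) v0 w)⁻¹ *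
          ∏ k ∈ Finset.range (j + 1), (2 * l2opNorm (A k) + 1) ≤ (1 / 4 : ℝ) ^ (j + 1))
    (N : ℕ)
    (hpert : ∀ j, N ≤ j → ∀ v w, |A j v w - B j v w| ≤ ε j * A j v w) :
    ∃ K : ℝ, 0 < K ∧
      ∀ (φ : ∀ j, V j → ℝ), φ ∈ limSet V B → ∀ (v0 : V 0) (j : ℕ), N ≤ j →
        (∀ k : ℕ,
          eNorm ((segProd V A j (k + 1)).mulVec (φ (j + (k + 1))) -
              (segProd V A j (k + 2)).mulVec (φ (j + (k + 2)))) ≤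
            K * (1 / 2 : ℝ) ^ (j + k + 1) * φ 0 v0) ∧
        ∀ δ : ℝ, 0 < δ → ∃ K0 : ℕ, ∀ k l : ℕ, K0 ≤ k → K0 ≤ l →
          eNorm ((segProd V A j k).mulVec (φ (j + k)) -
              (segProd V A j l).mulVec (φ (j + l))) < δ := by
  classical
  have v0star : V 0 := Classical.arbitrary (V 0)
  set cB := Finset.univ.inf' Finset.univ_nonempty
    (fun w : V N => prodUpTo V B N v0star w) with hcBdef
  set CA := Finset.univ.sup' Finset.univ_nonempty
    (fun w : V N => prodUpTo V A N v0star w) with hCAdef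
  have hAk : ∀ k (v0 : V 0) (w : V k), 0 < prodUpTo V A k v0 w := fun k v0 w =>
    lt_of_le_of_ne (prodUpTo_nonneg' V A hA k v0 w) (Ne.symm (hApos k v0 w))
  have hBk : ∀ k (v0 : V 0) (w : V k), 0 < prodUpTo V B k v0 w := fun k v0 w =>
    lt_of_le_of_ne (prodUpTo_nonneg' V B hB k v0 w) (Ne.symm (hBpos k v0 w))
  have hc : 0 < cB := (Finset.lt_inf'_iff _).mpr fun w _ => hBk N v0star w
  have hC : 0 < CA :=
    lt_of_lt_of_le (hAk N v0star (Classical.arbitrary (V N)))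
      (Finset.le_sup' _ (Finset.mem_univ _))
  have hcle : ∀ (v0 : V 0) (w : V N), cB ≤ prodUpTo V B N v0 w := by
    intro v0 w
    rw [Subsingleton.elim v0 v0star]
    exact Finset.inf'_le _ (Finset.mem_univ w)
  have hCge : ∀ (v0 : V 0) (w : V N), prodUpTo V A N v0 w ≤ CA := by
    intro v0 w
    rw [Subsingleton.elim v0 v0star]
    exact Finset.le_sup' _ (Finset.mem_univ w)
  -- comparison of the two products above level N
  have comp : ∀ s (v0 : V 0) (w : V (N + s)),
      cB / CA * (1 / 2 : ℝ) ^ s * prodUpTo V A (N + s) v0 w ≤ prodUpTo V B (N + s) v0 w := by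
    intro s
    induction s with
    | zero =>
      intro v0 w
      calc cB / CA * (1 / 2 : ℝ) ^ 0 * prodUpTo V A (N + 0) v0 w
          = cB / CA * prodUpTo V A (N + 0) v0 w := by ring
        _ ≤ cB / CA * CA :=
          mul_le_mul_of_nonneg_left (hCge v0 w) (div_nonneg hc.le hC.le)
        _ = cB := div_mul_cancel₀ _ hC.ne'
        _ ≤ prodUpTo V B (N + 0) v0 w := hcle v0 w
    | succ s ih =>
      intro v0 w
      show cB / CA * (1 / 2 : ℝ) ^ (s + 1) * prodUpTo V A (N + s + 1) v0 w ≤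
        prodUpTo V B (N + s + 1) v0 w
      have hstep : ∀ (u : V (N + s)) (w' : V (N + s + 1)),
          (1 / 2 : ℝ) * A (N + s) u w' ≤ B (N + s) u w' := by
        intro u w'
        have h1 := (abs_le.mp (hpert (N + s) (Nat.le_add_right _ _) u w')).2
        have h2 := (hε (N + s)).2
        have h3 := hA (N + s) u w'
        nlinarith
      have eB : prodUpTo V B (N + s + 1) v0 w
          = ∑ u, prodUpTo V B (N + s) v0 u * B (N + s) u w := by
        show (prodUpTo V B (N + s) * B (N + s)) v0 w = _
        exact Matrix.mul_apply
      have eA : prodUpTo V A (N + s + 1) v0 w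
          = ∑ u, prodUpTo V A (N + s) v0 u * A (N + s) u w := by
        show (prodUpTo V A (N + s) * A (N + s)) v0 w = _
        exact Matrix.mul_apply
      rw [eA, eB, Finset.mul_sum]
      apply Finset.sum_le_sum
      intro u _
      have h1 := ih v0 u
      have h2 := hstep u w
      calc cB / CA * (1 / 2 : ℝ) ^ (s + 1) * (prodUpTo V A (N + s) v0 u * A (N + s) u w)
          = (cB / CA * (1 / 2 : ℝ) ^ s * prodUpTo V A (N + s) v0 u) *
            ((1 / 2 : ℝ) * A (N + s) u w) := by ring
        _ ≤ prodUpTo V B (N + s) v0 u * B (N + s) u w :=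
          mul_le_mul h1 h2 (mul_nonneg (by norm_num) (hA _ _ _))
            (prodUpTo_nonneg' V B hB _ _ _)
  -- entrywise bound on φ at levels ≥ N
  have hphi : ∀ (φ : ∀ j, V j → ℝ), φ ∈ limSet V B → ∀ (M : ℕ), N ≤ M →
      ∀ (v0 : V 0) (w : V M),
      φ M w ≤ CA / cB * 2 ^ (M - N) * (prodUpTo V A M v0 w)⁻¹ * φ 0 v0 := by
    intro φ hφ M hM v0 w
    obtain ⟨s, rfl⟩ := Nat.le.dest hM
    rw [Nat.add_sub_cancel_left]
    have hent : prodUpTo V B (N + s) v0 w * φ (N + s) w ≤ φ 0 v0 := by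
      have he := phi0_eq' V B φ hφ.2 (N + s)
      have h0 : φ 0 v0 = ∑ u, prodUpTo V B (N + s) v0 u * φ (N + s) u := by
        rw [he]; rfl
      rw [h0]
      exact Finset.single_le_sum
        (f := fun u => prodUpTo V B (N + s) v0 u * φ (N + s) u)
        (fun u _ => mul_nonneg (prodUpTo_nonneg' V B hB _ _ _) (hφ.1 _ u))
        (Finset.mem_univ w)
    have hcmp := comp s v0 w
    have hDpos : 0 < cB / CA * (1 / 2 : ℝ) ^ s * prodUpTo V A (N + s) v0 w :=
      mul_pos (mul_pos (div_pos hc hC) (by positivity)) (hAk _ _ _)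
    have h1 : φ (N + s) w * (cB / CA * (1 / 2 : ℝ) ^ s * prodUpTo V A (N + s) v0 w)
        ≤ φ 0 v0 := by
      calc φ (N + s) w * (cB / CA * (1 / 2 : ℝ) ^ s * prodUpTo V A (N + s) v0 w)
          ≤ φ (N + s) w * prodUpTo V B (N + s) v0 w :=
            mul_le_mul_of_nonneg_left hcmp (hφ.1 _ w)
        _ = prodUpTo V B (N + s) v0 w * φ (N + s) w := mul_comm _ _
        _ ≤ φ 0 v0 := hent
    have h3 : φ (N + s) w ≤ φ 0 v0 / (cB / CA * (1 / 2 : ℝ) ^ s * prodUpTo V A (N + s) v0 w) :=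
      (le_div_iff₀ hDpos).mpr h1
    refine h3.trans (le_of_eq ?_)
    have hAne := (hAk (N + s) v0 w).ne'
    field_simp
    ring_nf
    rw [mul_assoc, ← mul_pow]; norm_num
  have hKpos : (0 : ℝ) < CA / cB + 1 := by
    have := div_nonneg hC.le hc.le
    linarith
  refine ⟨CA / cB + 1, hKpos, ?_⟩
  intro φ hφ v0 j hj
  have hφ1 := hφ.1
  have hφ2 := hφ.2
  have hφ00 : 0 ≤ φ 0 v0 := hφ1 0 v0
  have h1 : ∀ k : ℕ,
      eNorm ((segProd V A j (k + 1)).mulVec (φ (j + (k + 1))) -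
          (segProd V A j (k + 2)).mulVec (φ (j + (k + 2)))) ≤
        (CA / cB + 1) * (1 / 2 : ℝ) ^ (j + k + 1) * φ 0 v0 := by
    intro k
    have hεm := hε (j + k + 1)
    have hsc : (0 : ℝ) < Real.sqrt (Fintype.card (V (j + k + 2))) :=
      Real.sqrt_pos.mpr (by exact_mod_cast Fintype.card_pos)
    set P := ∏ i ∈ Finset.range (j + k + 2), (2 * l2opNorm (A i) + 1) with hPdef
    have hP0 : (0 : ℝ) < P := by
      rw [hPdef]
      apply Finset.prod_pos
      intro i _
      have := l2opNorm_nonneg' (A i)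
      linarith
    set R := ∏ i ∈ Finset.range (k + 1), l2opNorm (A (j + i)) with hRdef
    have hR0 : (0 : ℝ) ≤ R := by
      rw [hRdef]; exact Finset.prod_nonneg fun i _ => l2opNorm_nonneg' _
    set d := ε (j + k + 1) * Real.sqrt (Fintype.card (V (j + k + 2))) * P with hddef
    have hd0 : (0 : ℝ) < d := by
      rw [hddef]; exact mul_pos (mul_pos hεm.1 hsc) hP0
    set e := j + k + 2 - N with hedef
    set ψ := φ (j + k + 2) with hψdef
    have ediff : (segProd V A j (k + 1)).mulVec (φ (j + (k + 1))) -
          (segProd V A j (k + 2)).mulVec (φ (j + (k + 2)))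
        = (segProd V A j (k + 1)).mulVec
            ((B (j + k + 1)).mulVec ψ - (A (j + k + 1)).mulVec ψ) := by
      rw [Matrix.mulVec_sub]
      have e1 : (segProd V A j (k + 1)).mulVec (φ (j + (k + 1)))
          = (segProd V A j (k + 1)).mulVec ((B (j + k + 1)).mulVec ψ) :=
        congrArg (fun x => (segProd V A j (k + 1)).mulVec x) (hφ2 (j + k + 1))
      have e2 : (segProd V A j (k + 2)).mulVec (φ (j + (k + 2)))
          = (segProd V A j (k + 1)).mulVec ((A (j + k + 1)).mulVec ψ) :=
        (Matrix.mulVec_mulVec ψ (segProd V A j (k + 1)) (A (j + k + 1))).symm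
      rw [e1, e2]
    rw [ediff]
    have step1 : eNorm ((segProd V A j (k + 1)).mulVec
          ((B (j + k + 1)).mulVec ψ - (A (j + k + 1)).mulVec ψ))
        ≤ R * eNorm ((B (j + k + 1)).mulVec ψ - (A (j + k + 1)).mulVec ψ) :=
      segProd_mulVec_le' V A j (k + 1) _
    have hAB : ∀ v w', |B (j + k + 1) v w' - A (j + k + 1) v w'|
        ≤ ε (j + k + 1) * A (j + k + 1) v w' := by
      intro v w'
      rw [abs_sub_comm]
      exact hpert (j + k + 1) (by omega) v w'
    have step2 : eNorm ((B (j + k + 1)).mulVec ψ - (A (j + k + 1)).mulVec ψ)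
        ≤ ε (j + k + 1) * eNorm ((A (j + k + 1)).mulVec ψ) := by
      have hmono : eNorm ((B (j + k + 1)).mulVec ψ - (A (j + k + 1)).mulVec ψ)
          ≤ eNorm (ε (j + k + 1) • (A (j + k + 1)).mulVec ψ) := by
        apply eNorm_mono'
        intro v
        have lhs_eq : ((B (j + k + 1)).mulVec ψ - (A (j + k + 1)).mulVec ψ) v
            = ∑ w', (B (j + k + 1) v w' - A (j + k + 1) v w') * ψ w' := by
          simp [Matrix.mulVec, dotProduct, sub_mul, Finset.sum_sub_distrib]
        have rhs_eq : (ε (j + k + 1) • (A (j + k + 1)).mulVec ψ) v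
            = ∑ w', ε (j + k + 1) * (A (j + k + 1) v w' * ψ w') := by
          simp [Matrix.mulVec, dotProduct, Finset.mul_sum, smul_eq_mul]
        rw [lhs_eq, rhs_eq]
        calc |∑ w', (B (j + k + 1) v w' - A (j + k + 1) v w') * ψ w'|
            ≤ ∑ w', |(B (j + k + 1) v w' - A (j + k + 1) v w') * ψ w'| :=
              Finset.abs_sum_le_sum_abs _ _
          _ ≤ ∑ w', ε (j + k + 1) * (A (j + k + 1) v w' * ψ w') := by
              apply Finset.sum_le_sum
              intro w' _
              rw [abs_mul, abs_of_nonneg (hφ1 (j + k + 2) w')]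
              calc |B (j + k + 1) v w' - A (j + k + 1) v w'| * ψ w'
                  ≤ (ε (j + k + 1) * A (j + k + 1) v w') * ψ w' :=
                    mul_le_mul_of_nonneg_right (hAB v w') (hφ1 (j + k + 2) w')
                _ = ε (j + k + 1) * (A (j + k + 1) v w' * ψ w') := by ring
      calc eNorm ((B (j + k + 1)).mulVec ψ - (A (j + k + 1)).mulVec ψ)
          ≤ eNorm (ε (j + k + 1) • (A (j + k + 1)).mulVec ψ) := hmono
        _ = |ε (j + k + 1)| * eNorm ((A (j + k + 1)).mulVec ψ) := eNorm_smul' _ _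
        _ = ε (j + k + 1) * eNorm ((A (j + k + 1)).mulVec ψ) := by
            rw [abs_of_pos hεm.1]
    have step3 : eNorm ((A (j + k + 1)).mulVec ψ) ≤ l2opNorm (A (j + k + 1)) * eNorm ψ :=
      eNorm_mulVec_le' _ _
    have hQ : ∀ w : V (j + k + 2),
        (prodUpTo V A (j + k + 2) v0 w)⁻¹ ≤ (1 / 4 : ℝ) ^ (j + k + 2) / d := by
      intro w
      rw [le_div_iff₀ hd0]
      have hb := hbound (j + k + 1) v0 w
      calc (prodUpTo V A (j + k + 2) v0 w)⁻¹ * d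
          = ε (j + k + 1) * Real.sqrt (Fintype.card (V (j + k + 2))) *
              (prodUpTo V A (j + k + 2) v0 w)⁻¹ * P := by rw [hddef]; ring
        _ ≤ (1 / 4 : ℝ) ^ (j + k + 2) := hb
    have hCAcB0 : (0 : ℝ) ≤ CA / cB * 2 ^ e :=
      mul_nonneg (div_nonneg hC.le hc.le) (by positivity)
    have hT0 : (0 : ℝ) ≤ CA / cB * 2 ^ e * ((1 / 4 : ℝ) ^ (j + k + 2) / d) * φ 0 v0 :=
      mul_nonneg (mul_nonneg hCAcB0 (div_nonneg (by positivity) hd0.le)) hφ00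
    have hpsi : ∀ w, |ψ w| ≤ CA / cB * 2 ^ e * ((1 / 4 : ℝ) ^ (j + k + 2) / d) * φ 0 v0 := by
      intro w
      rw [hψdef, abs_of_nonneg (hφ1 (j + k + 2) w)]
      calc φ (j + k + 2) w
          ≤ CA / cB * 2 ^ e * (prodUpTo V A (j + k + 2) v0 w)⁻¹ * φ 0 v0 :=
            hphi φ hφ (j + k + 2) (by omega) v0 w
        _ ≤ CA / cB * 2 ^ e * ((1 / 4 : ℝ) ^ (j + k + 2) / d) * φ 0 v0 :=
            mul_le_mul_of_nonneg_right (mul_le_mul_of_nonneg_left (hQ w) hCAcB0) hφ00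
    have step4 : eNorm ψ ≤ Real.sqrt (Fintype.card (V (j + k + 2))) *
        (CA / cB * 2 ^ e * ((1 / 4 : ℝ) ^ (j + k + 2) / d) * φ 0 v0) :=
      eNorm_le_sqrt_card_mul' ψ _ hT0 hpsi
    have chain : eNorm ((segProd V A j (k + 1)).mulVec
          ((B (j + k + 1)).mulVec ψ - (A (j + k + 1)).mulVec ψ))
        ≤ R * (ε (j + k + 1) * (l2opNorm (A (j + k + 1)) *
            (Real.sqrt (Fintype.card (V (j + k + 2))) *
              (CA / cB * 2 ^ e * ((1 / 4 : ℝ) ^ (j + k + 2) / d) * φ 0 v0)))) := by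
      refine step1.trans ?_
      refine mul_le_mul_of_nonneg_left ?_ hR0
      refine step2.trans ?_
      refine mul_le_mul_of_nonneg_left ?_ hεm.1.le
      refine step3.trans ?_
      exact mul_le_mul_of_nonneg_left step4 (l2opNorm_nonneg' _)
    refine chain.trans ?_
    have hsne : Real.sqrt (Fintype.card (V (j + k + 2))) ≠ 0 := hsc.ne'
    have hPne : P ≠ 0 := hP0.ne'
    have hεne : ε (j + k + 1) ≠ 0 := hεm.1.ne'
    have hcc : ε (j + k + 1) * (Real.sqrt (Fintype.card (V (j + k + 2))) *
          ((1 / 4 : ℝ) ^ (j + k + 2) / d)) = (1 / 4 : ℝ) ^ (j + k + 2) / P := by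
      rw [hddef]
      field_simp
    have lhs_eq : R * (ε (j + k + 1) * (l2opNorm (A (j + k + 1)) *
          (Real.sqrt (Fintype.card (V (j + k + 2))) *
            (CA / cB * 2 ^ e * ((1 / 4 : ℝ) ^ (j + k + 2) / d) * φ 0 v0))))
        = (R * l2opNorm (A (j + k + 1))) *
            (ε (j + k + 1) * (Real.sqrt (Fintype.card (V (j + k + 2))) *
              ((1 / 4 : ℝ) ^ (j + k + 2) / d))) * (CA / cB * 2 ^ e * φ 0 v0) := by
      ring
    rw [lhs_eq, hcc]
    have hGP : R * l2opNorm (A (j + k + 1)) ≤ P := by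
      have g1 : R * l2opNorm (A (j + k + 1))
          = ∏ i ∈ Finset.range (k + 2), l2opNorm (A (j + i)) := by
        rw [Finset.prod_range_succ, hRdef]
        rfl
      rw [g1]
      have g2 : ∏ i ∈ Finset.range (k + 2), l2opNorm (A (j + i))
          ≤ ∏ i ∈ Finset.range (k + 2), (2 * l2opNorm (A (j + i)) + 1) :=
        Finset.prod_le_prod (fun i _ => l2opNorm_nonneg' _)
          (fun i _ => by linarith [l2opNorm_nonneg' (A (j + i))])
      have g3 : ∏ i ∈ Finset.range (k + 2), (2 * l2opNorm (A (j + i)) + 1)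
          = ∏ i ∈ Finset.Ico j (j + k + 2), (2 * l2opNorm (A i) + 1) := by
        have g := Finset.prod_Ico_eq_prod_range
          (fun i => 2 * l2opNorm (A i) + 1) j (j + k + 2)
        have g' : j + k + 2 - j = k + 2 := by omega
        rw [g'] at g
        exact g.symm
      have g4 : ∏ i ∈ Finset.Ico j (j + k + 2), (2 * l2opNorm (A i) + 1) ≤ P := by
        have hsplit : (∏ i ∈ Finset.Ico 0 j, (2 * l2opNorm (A i) + 1)) *
            ∏ i ∈ Finset.Ico j (j + k + 2), (2 * l2opNorm (A i) + 1) = P := by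
          rw [hPdef, Finset.range_eq_Ico]
          exact Finset.prod_Ico_consecutive _ (Nat.zero_le j) (by omega)
        have hone : (1 : ℝ) ≤ ∏ i ∈ Finset.Ico 0 j, (2 * l2opNorm (A i) + 1) := by
          have hp := Finset.prod_le_prod (s := Finset.Ico 0 j)
            (f := fun _ => (1 : ℝ)) (g := fun i => 2 * l2opNorm (A i) + 1)
            (fun i _ => by norm_num)
            (fun i _ => by
              show (1 : ℝ) ≤ 2 * l2opNorm (A i) + 1
              linarith [l2opNorm_nonneg' (A i)])
          simpa using hp
        have hnn : (0 : ℝ) ≤ ∏ i ∈ Finset.Ico j (j + k + 2), (2 * l2opNorm (A i) + 1) :=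
          Finset.prod_nonneg fun i _ => by linarith [l2opNorm_nonneg' (A i)]
        calc ∏ i ∈ Finset.Ico j (j + k + 2), (2 * l2opNorm (A i) + 1)
            ≤ (∏ i ∈ Finset.Ico 0 j, (2 * l2opNorm (A i) + 1)) *
              ∏ i ∈ Finset.Ico j (j + k + 2), (2 * l2opNorm (A i) + 1) :=
              le_mul_of_one_le_left hnn hone
          _ = P := hsplit
      exact le_trans (le_trans g2 (le_of_eq g3)) g4
    have h6 : (R * l2opNorm (A (j + k + 1))) * ((1 / 4 : ℝ) ^ (j + k + 2) / P)
        ≤ (1 / 4 : ℝ) ^ (j + k + 2) := by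
      calc (R * l2opNorm (A (j + k + 1))) * ((1 / 4 : ℝ) ^ (j + k + 2) / P)
          ≤ P * ((1 / 4 : ℝ) ^ (j + k + 2) / P) :=
            mul_le_mul_of_nonneg_right hGP (div_nonneg (by positivity) hP0.le)
        _ = (1 / 4 : ℝ) ^ (j + k + 2) := by
            rw [mul_comm]
            exact div_mul_cancel₀ _ hPne
    have h7 : (2 : ℝ) ^ e * (1 / 4 : ℝ) ^ (j + k + 2) ≤ (1 / 2 : ℝ) ^ (j + k + 1) := by
      have he2 : e ≤ j + k + 2 := by rw [hedef]; omega
      have h71 : (2 : ℝ) ^ e ≤ 2 ^ (j + k + 2) := pow_le_pow_right₀ (by norm_num) he2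
      calc (2 : ℝ) ^ e * (1 / 4 : ℝ) ^ (j + k + 2)
          ≤ 2 ^ (j + k + 2) * (1 / 4 : ℝ) ^ (j + k + 2) :=
            mul_le_mul_of_nonneg_right h71 (by positivity)
        _ = (1 / 2 : ℝ) ^ (j + k + 2) := by
            rw [← mul_pow]; norm_num
        _ ≤ (1 / 2 : ℝ) ^ (j + k + 1) :=
            pow_le_pow_of_le_one (by norm_num) (by norm_num) (by omega)
    calc (R * l2opNorm (A (j + k + 1))) * ((1 / 4 : ℝ) ^ (j + k + 2) / P) *
          (CA / cB * 2 ^ e * φ 0 v0)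
        ≤ (1 / 4 : ℝ) ^ (j + k + 2) * (CA / cB * 2 ^ e * φ 0 v0) :=
          mul_le_mul_of_nonneg_right h6 (mul_nonneg hCAcB0 hφ00)
      _ = CA / cB * ((2 : ℝ) ^ e * (1 / 4 : ℝ) ^ (j + k + 2)) * φ 0 v0 := by ring
      _ ≤ CA / cB * (1 / 2 : ℝ) ^ (j + k + 1) * φ 0 v0 :=
          mul_le_mul_of_nonneg_right
            (mul_le_mul_of_nonneg_left h7 (div_nonneg hC.le hc.le)) hφ00
      _ ≤ (CA / cB + 1) * (1 / 2 : ℝ) ^ (j + k + 1) * φ 0 v0 :=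
          mul_le_mul_of_nonneg_right
            (mul_le_mul_of_nonneg_right (by linarith) (by positivity)) hφ00
  refine ⟨h1, ?_⟩
  intro δ hδ
  set T : ℕ → V j → ℝ := fun k => (segProd V A j k).mulVec (φ (j + k)) with hT
  have htel : ∀ d k : ℕ, eNorm (T (k + 1) - T (k + 1 + d)) ≤
      (CA / cB + 1) * φ 0 v0 * ((1 / 2 : ℝ) ^ (j + k) - (1 / 2 : ℝ) ^ (j + k + d)) := by
    intro d
    induction d with
    | zero =>
      intro k
      have e0 : T (k + 1 + 0) = T (k + 1) := rfl
      rw [e0, sub_self, eNorm_zero']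
      have e1 : (1 / 2 : ℝ) ^ (j + k + 0) = (1 / 2 : ℝ) ^ (j + k) := rfl
      rw [e1, sub_self, mul_zero]
    | succ d ih =>
      intro k
      have tri' : eNorm (T (k + 1) - T (k + 1 + (d + 1)))
          ≤ eNorm (T (k + 1) - T (k + 2)) + eNorm (T (k + 2) - T (k + 2 + d)) := by
        rw [show T (k + 1 + (d + 1)) = T (k + 2 + d) from congrArg T (by omega)]
        exact eNorm_sub_le' _ _ _
      have hcons' : eNorm (T (k + 1) - T (k + 2))
          ≤ (CA / cB + 1) * (1 / 2 : ℝ) ^ (j + k + 1) * φ 0 v0 := h1 k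
      have ih' := ih (k + 1)
      have eq1 : j + (k + 1) = j + k + 1 := by omega
      rw [eq1] at ih'
      have ih'' : eNorm (T (k + 2) - T (k + 2 + d))
          ≤ (CA / cB + 1) * φ 0 v0 *
            ((1 / 2 : ℝ) ^ (j + k + 1) - (1 / 2 : ℝ) ^ (j + k + 1 + d)) := ih'
      have eq2 : j + k + (d + 1) = j + k + 1 + d := by omega
      rw [eq2]
      refine tri'.trans ?_
      have hsum := add_le_add hcons' ih''
      refine hsum.trans (le_of_eq ?_)
      have hpow : (1 / 2 : ℝ) ^ (j + k) = 2 * (1 / 2 : ℝ) ^ (j + k + 1) := by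
        rw [pow_succ]; ring
      rw [hpow]
      ring
  have hX1 : (0 : ℝ) < (CA / cB + 1) * φ 0 v0 + 1 := by nlinarith
  obtain ⟨n, hn⟩ := exists_pow_lt_of_lt_one (div_pos hδ hX1) (show (1 / 2 : ℝ) < 1 by norm_num)
  refine ⟨n + 1, ?_⟩
  have key : ∀ k l : ℕ, n + 1 ≤ k → k ≤ l → eNorm (T k - T l) < δ := by
    intro k l hk hkl
    obtain ⟨k', rfl⟩ : ∃ k', k = k' + 1 := ⟨k - 1, by omega⟩
    obtain ⟨d, rfl⟩ := Nat.le.dest hkl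
    have h8 := htel d k'
    have hKφ : (0 : ℝ) ≤ (CA / cB + 1) * φ 0 v0 := mul_nonneg hKpos.le hφ00
    have h9 : (CA / cB + 1) * φ 0 v0 *
          ((1 / 2 : ℝ) ^ (j + k') - (1 / 2 : ℝ) ^ (j + k' + d))
        ≤ (CA / cB + 1) * φ 0 v0 * (1 / 2 : ℝ) ^ (j + k') := by
      have hp0 : (0 : ℝ) ≤ (1 / 2 : ℝ) ^ (j + k' + d) := by positivity
      nlinarith
    have h10 : (1 / 2 : ℝ) ^ (j + k') ≤ (1 / 2 : ℝ) ^ n :=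
      pow_le_pow_of_le_one (by norm_num) (by norm_num) (by omega)
    have h11 : (CA / cB + 1) * φ 0 v0 * (1 / 2 : ℝ) ^ n < δ := by
      have hlt := (lt_div_iff₀ hX1).mp hn
      have hp0 : (0 : ℝ) ≤ (1 / 2 : ℝ) ^ n := by positivity
      nlinarith
    calc eNorm (T (k' + 1) - T (k' + 1 + d))
        ≤ (CA / cB + 1) * φ 0 v0 *
            ((1 / 2 : ℝ) ^ (j + k') - (1 / 2 : ℝ) ^ (j + k' + d)) := h8
      _ ≤ (CA / cB + 1) * φ 0 v0 * (1 / 2 : ℝ) ^ (j + k') := h9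
      _ ≤ (CA / cB + 1) * φ 0 v0 * (1 / 2 : ℝ) ^ n :=
          mul_le_mul_of_nonneg_left h10 (mul_nonneg hKpos.le hφ00)
      _ < δ := h11
  intro k l hk hl
  rcases le_total k l with h | h
  · exact key k l hk h
  · have hkey := key l k hl h
    rw [eNorm_sub_comm' (T l) (T k)] at hkey
    exact hkey
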